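/- Let k ≥ 2 and t ≥ 2 be integers and let P_1,…,P_k be finite posets in each of which every element lies in at least one t-chain. For 1 ≤ i ≤ k let n_i = |P_i| and let m_i be the number of t-chains of P_i, and assume 2 ≤ t ≤ n_1 ≤ n_2 ≤ … ≤ n_k and n_k ≥ 3. Let m = min{m_1,…,m_{k−1}} and assume m ≥ 1. Let d = binom(n_k, t) − m_k, let a = max{ binom(binom(n_i, t), m_i) : 1 ≤ i ≤ k−1 }, and let C_0 = ((k−1)^{m−1}/(2·e·a)) · (n_1/e)^{n_1}, where e is Euler's number. If a positive integer n satisfies ln n < m_k/(n_k + t·d + 2) and (ln n)^m · n^{n_{k−1}} < C_0 · (m_k/(n_k + t·d + 2))^m, then for every finite poset Q with n elements there exists a coloring χ of the t-chains of Q with colors {1,…,k} such that for no i ∈ {1,…,k} is there a monochromatic copy of P_i in color i; that is, for no i does there exist an injection f : P_i → Q with f(x) ≤ f(y) in Q whenever x ≤ y in P_i such that χ(C) = i for every t-chain C of Q all of whose elements lie in the image of f. -/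

import Mathlib

open Finset

lemma aux_total_mass {ι κ : Type*} [Fintype ι] [Fintype κ] [DecidableEq ι]
    (φ : ι → κ → ℝ) (hsum : ∀ C, ∑ j, φ C j = 1) :
    ∑ g : ι → κ, ∏ C, φ C (g C) = 1 := by
  rw [← Fintype.piFinset_univ, ← Finset.prod_univ_sum (fun _ => (Finset.univ : Finset κ)) φ]
  simp [hsum]

lemma aux_event_mass {ι κ : Type*} [Fintype ι] [Fintype κ] [DecidableEq ι] [DecidableEq κ]
    (φ : ι → κ → ℝ) (hφ : ∀ C j, 0 ≤ φ C j) (hsum : ∀ C, ∑ j, φ C j = 1)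
    (T : Finset ι) (i : κ) :
    ∑ g ∈ Finset.univ.filter (fun g : ι → κ => ∀ C ∈ T, g C = i), ∏ C, φ C (g C)
      ≤ ∏ C ∈ T, φ C i := by
  classical
  set ψ : ι → κ → ℝ := fun C j => if C ∈ T then (if j = i then φ C j else 0) else φ C j with hψ
  have hψ0 : ∀ C j, 0 ≤ ψ C j := by
    intro C j; simp only [hψ]; split_ifs <;> simp [hφ]
  have h1 : ∑ g ∈ Finset.univ.filter (fun g : ι → κ => ∀ C ∈ T, g C = i), ∏ C, φ C (g C)
      = ∑ g ∈ Finset.univ.filter (fun g : ι → κ => ∀ C ∈ T, g C = i), ∏ C, ψ C (g C) := by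
    refine Finset.sum_congr rfl fun g hg => Finset.prod_congr rfl fun C _ => ?_
    simp only [Finset.mem_filter] at hg
    simp only [hψ]
    by_cases hC : C ∈ T
    · simp [hC, hg.2 C hC]
    · simp [hC]
  have h2 : ∑ g ∈ Finset.univ.filter (fun g : ι → κ => ∀ C ∈ T, g C = i), ∏ C, ψ C (g C)
      ≤ ∑ g : ι → κ, ∏ C, ψ C (g C) := by
    refine Finset.sum_le_sum_of_subset_of_nonneg (Finset.filter_subset _ _) ?_
    intro g _ _
    exact Finset.prod_nonneg fun C _ => hψ0 C (g C)
  have h3 : ∑ g : ι → κ, ∏ C, ψ C (g C) = ∏ C, ∑ j, ψ C j := by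
    rw [← Fintype.piFinset_univ, ← Finset.prod_univ_sum (fun _ => (Finset.univ : Finset κ)) ψ]
  have h4 : ∏ C, ∑ j, ψ C j = ∏ C, (if C ∈ T then φ C i else 1) := by
    refine Finset.prod_congr rfl fun C _ => ?_
    by_cases hC : C ∈ T
    · simp only [hψ, hC, if_true]
      rw [Finset.sum_ite_eq' Finset.univ i (φ C)]
      simp
    · simp only [hψ, hC, if_false]
      exact hsum C
  have h5 : ∏ C, (if C ∈ T then φ C i else 1) = ∏ C ∈ T, φ C i := by
    rw [Finset.prod_ite_mem Finset.univ T (fun C => φ C i), Finset.univ_inter]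
  rw [h1]
  exact h2.trans (le_of_eq (by rw [h3, h4, h5]))

lemma aux_factorial_ge (n : ℕ) : ((n : ℝ) / Real.exp 1) ^ n ≤ (Nat.factorial n : ℝ) := by
  induction n with
  | zero => simp
  | succ n ih =>
    have he : (0:ℝ) < Real.exp 1 := Real.exp_pos 1
    have key : ((n:ℝ) + 1) ^ n ≤ Real.exp 1 * (n:ℝ) ^ n := by
      rcases Nat.eq_zero_or_pos n with h0 | h0
      · subst h0; simpa using Real.one_le_exp (by norm_num : (0:ℝ) ≤ 1)
      · have hn : (0:ℝ) < n := by exact_mod_cast h0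
        have h1 : ((n:ℝ) + 1) = n * (1 + 1/n) := by field_simp
        have h2 : (1 + 1/(n:ℝ)) ≤ Real.exp (1/n) := by
          have := Real.add_one_le_exp (1/(n:ℝ)); linarith
        calc ((n:ℝ)+1)^n = (n:ℝ)^n * (1+1/n)^n := by rw [h1, mul_pow]
          _ ≤ (n:ℝ)^n * (Real.exp (1/n))^n := by
              gcongr
          _ = (n:ℝ)^n * Real.exp 1 := by
              rw [← Real.exp_nat_mul]
              congr 1
              field_simp
          _ = Real.exp 1 * (n:ℝ)^n := mul_comm _ _
    have hstep : (((n:ℝ)+1)/Real.exp 1)^(n+1) ≤ ((n:ℝ)+1) * ((n:ℝ)/Real.exp 1)^n := by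
      have e1 : (((n:ℝ)+1)/Real.exp 1)^(n+1)
          = (((n:ℝ)+1)^n / (Real.exp 1)^n) * (((n:ℝ)+1)/Real.exp 1) := by
        rw [pow_succ, div_pow]
      have e2 : ((n:ℝ)+1) * ((n:ℝ)/Real.exp 1)^n
          = ((n:ℝ)+1) * ((n:ℝ)^n / (Real.exp 1)^n) := by rw [div_pow]
      rw [e1, e2]
      calc (((n:ℝ)+1)^n / (Real.exp 1)^n) * (((n:ℝ)+1)/Real.exp 1)
          ≤ (Real.exp 1 * (n:ℝ)^n / (Real.exp 1)^n) * (((n:ℝ)+1)/Real.exp 1) := by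
            gcongr
        _ = ((n:ℝ)+1) * ((n:ℝ)^n / (Real.exp 1)^n) := by
            field_simp
    have hlast : ((n:ℝ)+1) * ((n:ℝ)/Real.exp 1)^n ≤ ((n:ℝ)+1) * (Nat.factorial n : ℝ) := by
      have hp : (0:ℝ) ≤ (n:ℝ)+1 := by positivity
      exact mul_le_mul_of_nonneg_left ih hp
    push_cast [Nat.factorial_succ]
    exact hstep.trans hlast

/-- The set of `t`-chains of a poset `Q`: sets of `t` distinct pairwise
comparable elements. -/
def tChainSet (Q : Type*) [PartialOrder Q] (t : ℕ) : Set (Finset Q) :=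
  {C | C.card = t ∧ ∀ a ∈ C, ∀ b ∈ C, a ≤ b ∨ b ≤ a}

set_option maxHeartbeats 2000000 in
theorem stmt7 (k t : ℕ) (hk : 2 ≤ k) (ht : 2 ≤ t)
    (P : Fin k → Type) [∀ i, Fintype (P i)] [∀ i, PartialOrder (P i)]
    -- every element of each `P i` lies in at least one `t`-chain
    (hcover : ∀ i : Fin k, ∀ x : P i, ∃ C ∈ tChainSet (P i) t, x ∈ C)
    -- `n_1 ≤ n_2 ≤ … ≤ n_k`
    (hmono : ∀ i j : Fin k, i ≤ j → Fintype.card (P i) ≤ Fintype.card (P j))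
    -- `t ≤ n_1`
    (htn : t ≤ Fintype.card (P ⟨0, by omega⟩))
    -- `3 ≤ n_k`
    (hn3 : 3 ≤ Fintype.card (P ⟨k - 1, by omega⟩))
    -- `m = min{m_1, …, m_{k-1}}`, and `m ≥ 1`
    (m : ℕ)
    (hm : IsLeast {x : ℕ | ∃ i : Fin k, (i : ℕ) < k - 1 ∧
        x = (tChainSet (P i) t).ncard} m)
    (hm1 : 1 ≤ m)
    -- `a = max{ binom(binom(n_i, t), m_i) : 1 ≤ i ≤ k-1 }`
    (a : ℕ)
    (ha : IsGreatest {x : ℕ | ∃ i : Fin k, (i : ℕ) < k - 1 ∧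
        x = Nat.choose (Nat.choose (Fintype.card (P i)) t)
              ((tChainSet (P i) t).ncard)} a)
    -- `n_k`, `m_k`, `d = binom(n_k, t) − m_k` and the constant `C_0`
    (nk mk d : ℕ)
    (hnk : nk = Fintype.card (P ⟨k - 1, by omega⟩))
    (hmk : mk = (tChainSet (P ⟨k - 1, by omega⟩) t).ncard)
    (hd : d = Nat.choose nk t - mk)
    (C0 : ℝ)
    (hC0 : C0 = (((k : ℝ) - 1) ^ (m - 1) / (2 * Real.exp 1 * (a : ℝ))) *
        ((Fintype.card (P ⟨0, by omega⟩) : ℝ) / Real.exp 1) ^ (Fintype.card (P ⟨0, by omega⟩)))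
    -- the two conditions on `n`
    (n : ℕ) (hn : 0 < n)
    (h1 : Real.log n < (mk : ℝ) / ((nk : ℝ) + (t : ℝ) * (d : ℝ) + 2))
    (h2 : (Real.log n) ^ m * (n : ℝ) ^ (Fintype.card (P ⟨k - 2, by omega⟩)) <
        C0 * ((mk : ℝ) / ((nk : ℝ) + (t : ℝ) * (d : ℝ) + 2)) ^ m) :
    ∀ (Q : Type) [Fintype Q] [PartialOrder Q], Fintype.card Q = n →
      ∃ χ : Finset Q → Fin k, ∀ i : Fin k,
        ¬ ∃ f : P i → Q, Function.Injective f ∧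
            (∀ x y : P i, x ≤ y → f x ≤ f y) ∧
            ∀ C ∈ tChainSet Q t, (∀ q ∈ C, q ∈ Set.range f) → χ C = i := by
  intro Q _ _ hQ
  classical
  -- canonical indices
  have hk1 : k - 1 < k := by omega
  have hk2 : k - 2 < k := by omega
  have hk0 : 0 < k := by omega
  set last : Fin k := ⟨k - 1, hk1⟩ with hlastdef
  set pen : Fin k := ⟨k - 2, hk2⟩ with hpendef
  set fst : Fin k := ⟨0, hk0⟩ with hfstdef
  -- restated hypotheses (definitional transport across `Fin.mk` proofs)
  have htn' : t ≤ Fintype.card (P fst) := htn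
  have hn3' : 3 ≤ Fintype.card (P last) := hn3
  have hnk' : nk = Fintype.card (P last) := hnk
  have hmk' : mk = (tChainSet (P last) t).ncard := hmk
  set n1 : ℕ := Fintype.card (P fst) with hn1def
  set p : ℕ := Fintype.card (P pen) with hpdef
  have hC0' : C0 = (((k : ℝ) - 1) ^ (m - 1) / (2 * Real.exp 1 * (a : ℝ))) *
      ((n1 : ℝ) / Real.exp 1) ^ n1 := hC0
  set B : ℝ := (mk : ℝ) / ((nk : ℝ) + (t : ℝ) * (d : ℝ) + 2) with hBdef
  set L : ℝ := Real.log n with hLdef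
  have h1' : L < B := h1
  have h2' : L ^ m * (n : ℝ) ^ p < C0 * B ^ m := h2
  -- basic cardinalities
  have hn1all : ∀ i : Fin k, n1 ≤ Fintype.card (P i) := fun i =>
    hmono fst i (by simp [hfstdef, Fin.le_def])
  have hPI2 : ∀ i : Fin k, 2 ≤ Fintype.card (P i) := fun i =>
    le_trans (le_trans ht htn') (hn1all i)
  -- number of `t`-chains is at most the number of `t`-subsets
  have hμle : ∀ i : Fin k, (tChainSet (P i) t).ncard ≤ Nat.choose (Fintype.card (P i)) t := by
    intro i
    rw [Set.ncard_eq_toFinset_card _ (Set.toFinite _)]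
    have hsub : (Set.toFinite (tChainSet (P i) t)).toFinset ⊆
        Finset.powersetCard t Finset.univ := by
      intro C hC
      rw [Set.Finite.mem_toFinset] at hC
      exact Finset.mem_powersetCard.mpr ⟨Finset.subset_univ _, hC.1⟩
    have hcc := Finset.card_le_card hsub
    rwa [Finset.card_powersetCard, Finset.card_univ] at hcc
  -- the trivial case `n = 1`
  by_cases hone : n = 1
  · refine ⟨fun _ => fst, ?_⟩
    rintro i ⟨f, hinj, -, -⟩
    have hcineq := Fintype.card_le_of_injective f hinj
    rw [hQ, hone] at hcineq
    have := hPI2 i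
    omega
  have hn2 : 2 ≤ n := by omega
  -- positivity facts
  have hK : (1:ℝ) ≤ (k:ℝ) - 1 := by
    have : (2:ℝ) ≤ (k:ℝ) := by exact_mod_cast hk
    linarith
  have hK0 : (0:ℝ) < (k:ℝ) - 1 := by linarith
  have hmkpos : 0 < mk := by
    rw [hmk']
    rw [Set.ncard_pos (Set.toFinite _)]
    obtain ⟨x⟩ : Nonempty (P last) := Fintype.card_pos_iff.mp (by omega)
    obtain ⟨C, hC, -⟩ := hcover last x
    exact ⟨C, hC⟩
  have hmkR : (0:ℝ) < (mk:ℝ) := by exact_mod_cast hmkpos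
  have hDpos : (0:ℝ) < (nk : ℝ) + (t : ℝ) * (d : ℝ) + 2 := by positivity
  have hBpos : 0 < B := by rw [hBdef]; exact div_pos hmkR hDpos
  have hLpos : 0 < L := by
    rw [hLdef]
    exact Real.log_pos (by exact_mod_cast hn2)
  have hLB1 : L / B < 1 := (div_lt_one hBpos).mpr h1'
  set q : ℝ := L / (((k:ℝ) - 1) * B) with hqdef
  have hq0 : 0 < q := div_pos hLpos (mul_pos hK0 hBpos)
  have hKq : ((k:ℝ) - 1) * q = L / B := by
    rw [hqdef]
    field_simp
  have hq1 : q ≤ 1 := by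
    have hle : q ≤ L / B := by
      rw [hqdef]
      exact div_le_div_of_nonneg_left hLpos.le hBpos (by nlinarith)
    linarith
  have hwlast0 : (0:ℝ) ≤ 1 - ((k:ℝ)-1) * q := by rw [hKq]; linarith
  -- the weights
  set w : Fin k → ℝ := fun j => if j = last then 1 - ((k:ℝ)-1)*q else q with hwdef
  have hw0 : ∀ j, 0 ≤ w j := by
    intro j
    simp only [hwdef]
    split_ifs
    · exact hwlast0
    · exact hq0.le
  have hwsum : ∑ j : Fin k, w j = 1 := by
    have hrw : ∀ j : Fin k, w j
        = (if j = last then (1 - ((k:ℝ)-1)*q - q) else 0) + q := by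
      intro j
      simp only [hwdef]
      split_ifs <;> ring
    rw [Finset.sum_congr rfl (fun j _ => hrw j), Finset.sum_add_distrib,
      Finset.sum_ite_eq' Finset.univ last (fun _ => (1 - ((k:ℝ)-1)*q - q)),
      Finset.sum_const, Finset.card_univ, Fintype.card_fin]
    simp only [Finset.mem_univ, if_true, nsmul_eq_mul]
    ring
  -- the chains of Q and the product measure
  set F : Finset (Finset Q) := Finset.univ.filter (fun C => C ∈ tChainSet Q t) with hFdef
  set φ : Finset Q → Fin k → ℝ := fun C j => if C ∈ F then w j else 1/(k:ℝ) with hφdef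
  have hφ0 : ∀ C j, 0 ≤ φ C j := by
    intro C j
    simp only [hφdef]
    split_ifs
    · exact hw0 j
    · positivity
  have hφsum : ∀ C, ∑ j, φ C j = 1 := by
    intro C
    simp only [hφdef]
    split_ifs
    · exact hwsum
    · rw [Finset.sum_const, Finset.card_univ, Fintype.card_fin, nsmul_eq_mul]
      field_simp
  set Pr : (Finset Q → Fin k) → ℝ := fun g => ∏ C, φ C (g C) with hPrdef
  have hPr0 : ∀ g, 0 ≤ Pr g := fun g => Finset.prod_nonneg fun C _ => hφ0 C (g C)
  have htotal : ∑ g : Finset Q → Fin k, Pr g = 1 := aux_total_mass φ hφsum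
  -- number of t-chains inside a Finset of P i, as a Finset
  have hμcard : ∀ i : Fin k,
      (Finset.univ.filter (fun C => C ∈ tChainSet (P i) t)).card
        = (tChainSet (P i) t).ncard := by
    intro i
    rw [Set.ncard_eq_toFinset_card _ (Set.toFinite _)]
    congr 1
    ext C
    simp only [Set.Finite.mem_toFinset, Finset.mem_filter, Finset.mem_univ, true_and]
  by_contra hcon
  push_neg at hcon
  -- the covering step: every coloring is in some elementary event
  have cover : ∀ g : Finset Q → Fin k, ∃ i : Fin k,
      ∃ S ∈ Finset.powersetCard (Fintype.card (P i)) (Finset.univ : Finset Q),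
      ∃ T ∈ Finset.powersetCard ((tChainSet (P i) t).ncard)
          (F.filter (fun C => C ⊆ S)),
      ∀ C ∈ T, g C = i := by
    intro g
    obtain ⟨i, f, hinj, hmon, hcol⟩ := hcon g
    have himg : ∀ C ∈ Finset.univ.filter (fun C => C ∈ tChainSet (P i) t),
        C.image f ∈ tChainSet Q t ∧ C.image f ⊆ Finset.image f Finset.univ := by
      intro C hC
      have hC' : C ∈ tChainSet (P i) t := (Finset.mem_filter.mp hC).2
      constructor
      · constructor
        · rw [Finset.card_image_of_injective _ hinj]
          exact hC'.1
        · intro x hx y hy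
          obtain ⟨a1, ha1, rfl⟩ := Finset.mem_image.mp hx
          obtain ⟨b1, hb1, rfl⟩ := Finset.mem_image.mp hy
          rcases hC'.2 a1 ha1 b1 hb1 with hab | hab
          · exact Or.inl (hmon _ _ hab)
          · exact Or.inr (hmon _ _ hab)
      · exact Finset.image_subset_image (Finset.subset_univ C)
    refine ⟨i, Finset.image f Finset.univ, ?_,
      (Finset.univ.filter (fun C => C ∈ tChainSet (P i) t)).image (Finset.image f),
      ?_, ?_⟩
    · exact Finset.mem_powersetCard.mpr ⟨Finset.subset_univ _,
        by rw [Finset.card_image_of_injective _ hinj, Finset.card_univ]⟩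
    · refine Finset.mem_powersetCard.mpr ⟨?_, ?_⟩
      · intro D hD
        obtain ⟨C, hC, rfl⟩ := Finset.mem_image.mp hD
        refine Finset.mem_filter.mpr ⟨?_, (himg C hC).2⟩
        rw [hFdef]
        exact Finset.mem_filter.mpr ⟨Finset.mem_univ _, (himg C hC).1⟩
      · rw [Finset.card_image_of_injective _ (Finset.image_injective hinj)]
        exact hμcard i
    · intro D hD
      obtain ⟨C, hC, rfl⟩ := Finset.mem_image.mp hD
      refine hcol _ (himg C hC).1 ?_
      intro x hx
      obtain ⟨a1, _, rfl⟩ := Finset.mem_image.mp hx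
      exact ⟨a1, rfl⟩
  -- elementary event masses
  set Ev : Fin k → Finset (Finset Q) → ℝ := fun i T =>
    ∑ g ∈ Finset.univ.filter (fun g : Finset Q → Fin k => ∀ C ∈ T, g C = i), Pr g
    with hEvdef
  have hEv0 : ∀ i T, 0 ≤ Ev i T := fun i T =>
    Finset.sum_nonneg fun g _ => hPr0 g
  -- one is at most the total union bound
  have hone' : (1:ℝ) ≤ ∑ i : Fin k,
      ∑ S ∈ Finset.powersetCard (Fintype.card (P i)) (Finset.univ : Finset Q),
      ∑ T ∈ Finset.powersetCard ((tChainSet (P i) t).ncard)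
          (F.filter (fun C => C ⊆ S)), Ev i T := by
    rw [← htotal]
    have key : ∀ g : Finset Q → Fin k, Pr g ≤ ∑ i : Fin k,
        ∑ S ∈ Finset.powersetCard (Fintype.card (P i)) (Finset.univ : Finset Q),
        ∑ T ∈ Finset.powersetCard ((tChainSet (P i) t).ncard)
            (F.filter (fun C => C ⊆ S)),
        (if (∀ C ∈ T, g C = i) then Pr g else 0) := by
      intro g
      obtain ⟨i1, S1, hS1, T1, hT1, hcolor⟩ := cover g
      have hifnn : ∀ (i : Fin k) (T : Finset (Finset Q)),
          (0:ℝ) ≤ (if (∀ C ∈ T, g C = i) then Pr g else 0) := by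
        intro i T
        split_ifs
        · exact hPr0 g
        · exact le_refl 0
      have inner1 : Pr g ≤ ∑ T ∈ Finset.powersetCard ((tChainSet (P i1) t).ncard)
          (F.filter (fun C => C ⊆ S1)), (if (∀ C ∈ T, g C = i1) then Pr g else 0) := by
        have heq : (if (∀ C ∈ T1, g C = i1) then Pr g else 0) = Pr g := if_pos hcolor
        have hs := Finset.single_le_sum (fun T _ => hifnn i1 T) hT1
        rw [heq] at hs
        exact hs
      have inner2 : ∑ T ∈ Finset.powersetCard ((tChainSet (P i1) t).ncard)
            (F.filter (fun C => C ⊆ S1)), (if (∀ C ∈ T, g C = i1) then Pr g else 0)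
          ≤ ∑ S ∈ Finset.powersetCard (Fintype.card (P i1)) (Finset.univ : Finset Q),
            ∑ T ∈ Finset.powersetCard ((tChainSet (P i1) t).ncard)
              (F.filter (fun C => C ⊆ S)), (if (∀ C ∈ T, g C = i1) then Pr g else 0) := by
        have h := Finset.single_le_sum (f := fun S =>
            ∑ T ∈ Finset.powersetCard ((tChainSet (P i1) t).ncard)
              (F.filter (fun C => C ⊆ S)), (if (∀ C ∈ T, g C = i1) then Pr g else 0))
          (fun S _ => Finset.sum_nonneg fun T _ => hifnn i1 T) hS1
        beta_reduce at h
        exact h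
      have inner3 : ∑ S ∈ Finset.powersetCard (Fintype.card (P i1)) (Finset.univ : Finset Q),
            ∑ T ∈ Finset.powersetCard ((tChainSet (P i1) t).ncard)
              (F.filter (fun C => C ⊆ S)), (if (∀ C ∈ T, g C = i1) then Pr g else 0)
          ≤ ∑ i : Fin k,
            ∑ S ∈ Finset.powersetCard (Fintype.card (P i)) (Finset.univ : Finset Q),
            ∑ T ∈ Finset.powersetCard ((tChainSet (P i) t).ncard)
              (F.filter (fun C => C ⊆ S)), (if (∀ C ∈ T, g C = i) then Pr g else 0) :=
        Finset.single_le_sum (f := fun i =>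
            ∑ S ∈ Finset.powersetCard (Fintype.card (P i)) (Finset.univ : Finset Q),
            ∑ T ∈ Finset.powersetCard ((tChainSet (P i) t).ncard)
              (F.filter (fun C => C ⊆ S)), (if (∀ C ∈ T, g C = i) then Pr g else 0))
          (fun i _ => Finset.sum_nonneg fun S _ => Finset.sum_nonneg fun T _ => hifnn i T)
          (Finset.mem_univ i1)
      exact inner1.trans (inner2.trans inner3)
    calc ∑ g : Finset Q → Fin k, Pr g
        ≤ ∑ g : Finset Q → Fin k, ∑ i : Fin k,
          ∑ S ∈ Finset.powersetCard (Fintype.card (P i)) (Finset.univ : Finset Q),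
          ∑ T ∈ Finset.powersetCard ((tChainSet (P i) t).ncard)
            (F.filter (fun C => C ⊆ S)),
          (if (∀ C ∈ T, g C = i) then Pr g else 0) :=
          Finset.sum_le_sum (fun g _ => key g)
      _ = ∑ i : Fin k,
          ∑ S ∈ Finset.powersetCard (Fintype.card (P i)) (Finset.univ : Finset Q),
          ∑ T ∈ Finset.powersetCard ((tChainSet (P i) t).ncard)
            (F.filter (fun C => C ⊆ S)), Ev i T := by
          rw [Finset.sum_comm]
          refine Finset.sum_congr rfl fun i _ => ?_
          rw [Finset.sum_comm]
          refine Finset.sum_congr rfl fun S _ => ?_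
          rw [Finset.sum_comm]
          refine Finset.sum_congr rfl fun T _ => ?_
          rw [hEvdef]
          exact (Finset.sum_filter _ _).symm
  -- bound for an individual event
  have hEvbound : ∀ i : Fin k,
      ∀ S ∈ Finset.powersetCard (Fintype.card (P i)) (Finset.univ : Finset Q),
      ∀ T ∈ Finset.powersetCard ((tChainSet (P i) t).ncard) (F.filter (fun C => C ⊆ S)),
      Ev i T ≤ (w i) ^ ((tChainSet (P i) t).ncard) := by
    intro i S hS T hT
    obtain ⟨hTsub, hTcard⟩ := Finset.mem_powersetCard.mp hT
    have hmass := aux_event_mass φ hφ0 hφsum T i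
    have hprod : ∏ C ∈ T, φ C i = (w i) ^ ((tChainSet (P i) t).ncard) := by
      have hc : ∀ C ∈ T, φ C i = w i := by
        intro C hC
        have hCF : C ∈ F := (Finset.mem_filter.mp (hTsub hC)).1
        simp only [hφdef]
        rw [if_pos hCF]
      rw [Finset.prod_congr rfl hc, Finset.prod_const, hTcard]
    exact le_of_le_of_eq hmass hprod
  -- sum over T
  have hTbound : ∀ i : Fin k,
      ∀ S ∈ Finset.powersetCard (Fintype.card (P i)) (Finset.univ : Finset Q),
      ∑ T ∈ Finset.powersetCard ((tChainSet (P i) t).ncard) (F.filter (fun C => C ⊆ S)),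
        Ev i T ≤
      (Nat.choose (Nat.choose (Fintype.card (P i)) t) ((tChainSet (P i) t).ncard) : ℝ)
        * (w i) ^ ((tChainSet (P i) t).ncard) := by
    intro i S hS
    have hwp : (0:ℝ) ≤ (w i) ^ ((tChainSet (P i) t).ncard) := pow_nonneg (hw0 i) _
    have hcardle : (F.filter (fun C => C ⊆ S)).card ≤ Nat.choose (Fintype.card (P i)) t := by
      have hsub : F.filter (fun C => C ⊆ S) ⊆ Finset.powersetCard t S := by
        intro C hC
        obtain ⟨hCF, hCS⟩ := Finset.mem_filter.mp hC
        have hCc : C ∈ tChainSet Q t := by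
          rw [hFdef] at hCF
          exact (Finset.mem_filter.mp hCF).2
        exact Finset.mem_powersetCard.mpr ⟨hCS, hCc.1⟩
      have hcc := Finset.card_le_card hsub
      rwa [Finset.card_powersetCard, (Finset.mem_powersetCard.mp hS).2] at hcc
    calc ∑ T ∈ Finset.powersetCard ((tChainSet (P i) t).ncard)
          (F.filter (fun C => C ⊆ S)), Ev i T
        ≤ (Finset.powersetCard ((tChainSet (P i) t).ncard)
            (F.filter (fun C => C ⊆ S))).card • ((w i) ^ ((tChainSet (P i) t).ncard)) :=
          Finset.sum_le_card_nsmul _ _ _ (fun T hT => hEvbound i S hS T hT)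
      _ = ((Finset.powersetCard ((tChainSet (P i) t).ncard)
            (F.filter (fun C => C ⊆ S))).card : ℝ)
            * ((w i) ^ ((tChainSet (P i) t).ncard)) := nsmul_eq_mul _ _
      _ ≤ (Nat.choose (Nat.choose (Fintype.card (P i)) t) ((tChainSet (P i) t).ncard) : ℝ)
            * (w i) ^ ((tChainSet (P i) t).ncard) := by
          apply mul_le_mul_of_nonneg_right _ hwp
          rw [Finset.card_powersetCard]
          exact_mod_cast Nat.choose_le_choose _ hcardle
  -- sum over S
  have hSbound : ∀ i : Fin k,
      ∑ S ∈ Finset.powersetCard (Fintype.card (P i)) (Finset.univ : Finset Q),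
      ∑ T ∈ Finset.powersetCard ((tChainSet (P i) t).ncard) (F.filter (fun C => C ⊆ S)),
        Ev i T ≤
      (Nat.choose n (Fintype.card (P i)) : ℝ) *
      ((Nat.choose (Nat.choose (Fintype.card (P i)) t) ((tChainSet (P i) t).ncard) : ℝ)
        * (w i) ^ ((tChainSet (P i) t).ncard)) := by
    intro i
    calc ∑ S ∈ Finset.powersetCard (Fintype.card (P i)) (Finset.univ : Finset Q),
        ∑ T ∈ Finset.powersetCard ((tChainSet (P i) t).ncard) (F.filter (fun C => C ⊆ S)),
          Ev i T
        ≤ (Finset.powersetCard (Fintype.card (P i)) (Finset.univ : Finset Q)).card •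
          ((Nat.choose (Nat.choose (Fintype.card (P i)) t) ((tChainSet (P i) t).ncard) : ℝ)
            * (w i) ^ ((tChainSet (P i) t).ncard)) :=
          Finset.sum_le_card_nsmul _ _ _ (fun S hS => hTbound i S hS)
      _ = ((Finset.powersetCard (Fintype.card (P i)) (Finset.univ : Finset Q)).card : ℝ) *
          ((Nat.choose (Nat.choose (Fintype.card (P i)) t) ((tChainSet (P i) t).ncard) : ℝ)
            * (w i) ^ ((tChainSet (P i) t).ncard)) := nsmul_eq_mul _ _
      _ = (Nat.choose n (Fintype.card (P i)) : ℝ) *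
          ((Nat.choose (Nat.choose (Fintype.card (P i)) t) ((tChainSet (P i) t).ncard) : ℝ)
            * (w i) ^ ((tChainSet (P i) t).ncard)) := by
          rw [Finset.card_powersetCard, Finset.card_univ, hQ]
  set term : Fin k → ℝ := fun i =>
    (Nat.choose n (Fintype.card (P i)) : ℝ) *
    ((Nat.choose (Nat.choose (Fintype.card (P i)) t) ((tChainSet (P i) t).ncard) : ℝ)
      * (w i) ^ ((tChainSet (P i) t).ncard)) with htermdef
  have htotle : (1:ℝ) ≤ ∑ i : Fin k, term i :=
    hone'.trans (Finset.sum_le_sum fun i _ => hSbound i)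
  -- positivity of a and n1!
  have hapos : 0 < a := by
    obtain ⟨ia, hia, haeq⟩ := ha.1
    rw [haeq]
    exact Nat.choose_pos (hμle ia)
  have haR : (0:ℝ) < (a:ℝ) := by exact_mod_cast hapos
  have hfacpos : (0:ℝ) < (Nat.factorial n1 : ℝ) := by exact_mod_cast Nat.factorial_pos n1
  -- the small-color terms
  have hsmall : ∀ i ∈ Finset.univ.erase last,
      term i ≤ ((n:ℝ) ^ p / (Nat.factorial n1 : ℝ)) * ((a:ℝ) * q ^ m) := by
    intro i hi
    have hine : i ≠ last := (Finset.mem_erase.mp hi).1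
    have hik : (i : ℕ) < k - 1 := by
      have h1k : (i : ℕ) < k := i.isLt
      have hne : (i : ℕ) ≠ k - 1 := fun hh => hine (by rw [hlastdef]; exact Fin.ext hh)
      omega
    have hwi : w i = q := by
      simp only [hwdef]
      rw [if_neg hine]
    have hνp : Fintype.card (P i) ≤ p := by
      rw [hpdef]
      refine hmono i pen ?_
      rw [hpendef, Fin.le_def]
      simp only []
      omega
    have c1 : (Nat.choose n (Fintype.card (P i)) : ℝ)
        ≤ (n:ℝ) ^ p / (Nat.factorial n1 : ℝ) := by
      rw [le_div_iff₀ hfacpos]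
      have hnat : Nat.choose n (Fintype.card (P i)) * Nat.factorial n1 ≤ n ^ p := by
        calc Nat.choose n (Fintype.card (P i)) * Nat.factorial n1
            ≤ Nat.choose n (Fintype.card (P i)) * Nat.factorial (Fintype.card (P i)) :=
              Nat.mul_le_mul_left _ (Nat.factorial_le (hn1all i))
          _ = Nat.descFactorial n (Fintype.card (P i)) := by
              rw [Nat.descFactorial_eq_factorial_mul_choose]
              ring
          _ ≤ n ^ (Fintype.card (P i)) := Nat.descFactorial_le_pow _ _
          _ ≤ n ^ p := Nat.pow_le_pow_right (by omega) hνp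
      exact_mod_cast hnat
    have c2 : (Nat.choose (Nat.choose (Fintype.card (P i)) t)
        ((tChainSet (P i) t).ncard) : ℝ) ≤ (a:ℝ) := by
      exact_mod_cast ha.2 ⟨i, hik, rfl⟩
    have c3 : q ^ ((tChainSet (P i) t).ncard) ≤ q ^ m :=
      pow_le_pow_of_le_one hq0.le hq1 (hm.2 ⟨i, hik, rfl⟩)
    simp only [htermdef]
    rw [hwi]
    have hinner : (Nat.choose (Nat.choose (Fintype.card (P i)) t)
          ((tChainSet (P i) t).ncard) : ℝ) * q ^ ((tChainSet (P i) t).ncard)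
        ≤ (a:ℝ) * q ^ m :=
      mul_le_mul c2 c3 (pow_nonneg hq0.le _) haR.le
    exact mul_le_mul c1 hinner (by positivity) (by positivity)
  have hsmallsum : ∑ i ∈ Finset.univ.erase last, term i
      ≤ ((k:ℝ) - 1) * (((n:ℝ) ^ p / (Nat.factorial n1 : ℝ)) * ((a:ℝ) * q ^ m)) := by
    calc ∑ i ∈ Finset.univ.erase last, term i
        ≤ (Finset.univ.erase last).card •
          (((n:ℝ) ^ p / (Nat.factorial n1 : ℝ)) * ((a:ℝ) * q ^ m)) :=
          Finset.sum_le_card_nsmul _ _ _ hsmall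
      _ = ((Finset.univ.erase last).card : ℝ) *
          (((n:ℝ) ^ p / (Nat.factorial n1 : ℝ)) * ((a:ℝ) * q ^ m)) := nsmul_eq_mul _ _
      _ = ((k:ℝ) - 1) *
          (((n:ℝ) ^ p / (Nat.factorial n1 : ℝ)) * ((a:ℝ) * q ^ m)) := by
          rw [Finset.card_erase_of_mem (Finset.mem_univ _), Finset.card_univ, Fintype.card_fin]
          congr 1
          push_cast [Nat.cast_sub (by omega : 1 ≤ k)]
          ring
  -- the key strict numeric estimate for the small colors
  have hkey : ((k:ℝ) - 1) * (((n:ℝ) ^ p / (Nat.factorial n1 : ℝ)) * ((a:ℝ) * q ^ m))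
      < 1/4 := by
    have hqm : q ^ m = L ^ m / (((k:ℝ)-1) ^ m * B ^ m) := by
      rw [hqdef, div_pow, mul_pow]
    have hKm : ((k:ℝ)-1) ^ m = ((k:ℝ)-1) ^ (m-1) * ((k:ℝ)-1) := by
      rw [← pow_succ]
      congr 1
      omega
    have hBm : (0:ℝ) < B ^ m := pow_pos hBpos m
    have hKm1 : (0:ℝ) < ((k:ℝ)-1) ^ (m-1) := pow_pos hK0 _
    have hstep1 : ((k:ℝ) - 1) * (((n:ℝ) ^ p / (Nat.factorial n1 : ℝ)) * ((a:ℝ) * q ^ m))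
        = ((a:ℝ) / ((Nat.factorial n1 : ℝ) * (((k:ℝ)-1) ^ (m-1)) * B ^ m))
          * (L ^ m * (n:ℝ) ^ p) := by
      rw [hqm, hKm]
      field_simp
    have hcoef : (0:ℝ) < (a:ℝ) / ((Nat.factorial n1 : ℝ) * (((k:ℝ)-1) ^ (m-1)) * B ^ m) := by
      positivity
    have hstep2 : ((a:ℝ) / ((Nat.factorial n1 : ℝ) * (((k:ℝ)-1) ^ (m-1)) * B ^ m))
          * (L ^ m * (n:ℝ) ^ p)
        < ((a:ℝ) / ((Nat.factorial n1 : ℝ) * (((k:ℝ)-1) ^ (m-1)) * B ^ m))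
          * (C0 * B ^ m) :=
      mul_lt_mul_of_pos_left h2' hcoef
    have hstep3 : ((a:ℝ) / ((Nat.factorial n1 : ℝ) * (((k:ℝ)-1) ^ (m-1)) * B ^ m))
          * (C0 * B ^ m)
        = (((n1:ℝ)/Real.exp 1) ^ n1 / (Nat.factorial n1 : ℝ)) * (1/(2*Real.exp 1)) := by
      rw [hC0']
      have hepos : (0:ℝ) < Real.exp 1 := Real.exp_pos 1
      field_simp
    have hstep4 : (((n1:ℝ)/Real.exp 1) ^ n1 / (Nat.factorial n1 : ℝ)) ≤ 1 :=
      (div_le_one hfacpos).mpr (aux_factorial_ge n1)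
    have hexp2 : (2:ℝ) ≤ Real.exp 1 := by
      have h9 := Real.exp_one_gt_d9
      norm_num at h9
      linarith
    have hfin : (((n1:ℝ)/Real.exp 1) ^ n1 / (Nat.factorial n1 : ℝ)) * (1/(2*Real.exp 1))
        ≤ 1/4 := by
      have h14 : 1/(2*Real.exp 1) ≤ 1/4 := by
        rw [div_le_div_iff₀ (by positivity) (by norm_num : (0:ℝ) < 4)]
        linarith
      calc (((n1:ℝ)/Real.exp 1) ^ n1 / (Nat.factorial n1 : ℝ)) * (1/(2*Real.exp 1))
          ≤ 1 * (1/(2*Real.exp 1)) := mul_le_mul_of_nonneg_right hstep4 (by positivity)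
        _ = 1/(2*Real.exp 1) := one_mul _
        _ ≤ 1/4 := h14
    rw [hstep1]
    calc ((a:ℝ) / ((Nat.factorial n1 : ℝ) * (((k:ℝ)-1) ^ (m-1)) * B ^ m))
          * (L ^ m * (n:ℝ) ^ p)
        < ((a:ℝ) / ((Nat.factorial n1 : ℝ) * (((k:ℝ)-1) ^ (m-1)) * B ^ m))
          * (C0 * B ^ m) := hstep2
      _ = (((n1:ℝ)/Real.exp 1) ^ n1 / (Nat.factorial n1 : ℝ)) * (1/(2*Real.exp 1)) := hstep3
      _ ≤ 1/4 := hfin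
  -- the big-color term
  have hbig : term last ≤ 1/4 := by
    have hwlast : w last = 1 - L/B := by
      simp only [hwdef, if_true]
      rw [hKq]
    simp only [htermdef]
    rw [← hnk', ← hmk', hwlast]
    by_cases hcase : n < nk
    · rw [Nat.choose_eq_zero_of_lt hcase]
      norm_num
    · push_neg at hcase
      have hmkle2 : mk ≤ Nat.choose nk t := by
        rw [hmk', hnk']
        exact hμle last
      have hnat : Nat.choose n nk * Nat.choose (Nat.choose nk t) mk
          ≤ n ^ nk * n ^ (t*d) := by
        apply Nat.mul_le_mul
        · exact Nat.choose_le_pow _ _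
        · have hsymm : Nat.choose (Nat.choose nk t) mk = Nat.choose (Nat.choose nk t) d := by
            conv_lhs => rw [← Nat.sub_sub_self hmkle2]
            rw [Nat.choose_symm (Nat.sub_le _ _), hd]
          rw [hsymm]
          calc Nat.choose (Nat.choose nk t) d
              ≤ (Nat.choose nk t) ^ d := Nat.choose_le_pow _ _
            _ ≤ (nk ^ t) ^ d := Nat.pow_le_pow_left (Nat.choose_le_pow _ _) d
            _ ≤ (n ^ t) ^ d := Nat.pow_le_pow_left (Nat.pow_le_pow_left hcase t) d
            _ = n ^ (t * d) := by rw [← pow_mul]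
      have hbase : (0:ℝ) ≤ 1 - L/B := by rw [← hKq]; exact hwlast0
      have hexp1 : 1 - L/B ≤ Real.exp (-(L/B)) := by
        have := Real.add_one_le_exp (-(L/B)); linarith
      have hpow1 : (1 - L/B) ^ mk ≤ (Real.exp (-(L/B))) ^ mk :=
        pow_le_pow_left₀ hbase hexp1 mk
      have hpow2 : (Real.exp (-(L/B))) ^ mk = ((n:ℝ)⁻¹) ^ (nk + t*d + 2) := by
        rw [← Real.exp_nat_mul]
        have harg : (mk:ℝ) * -(L/B) = -(L * ((nk:ℝ) + (t:ℝ)*(d:ℝ) + 2)) := by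
          rw [hBdef]
          field_simp
        rw [harg]
        have hLn : Real.exp (-L) = (n:ℝ)⁻¹ := by
          rw [Real.exp_neg, hLdef, Real.exp_log (by exact_mod_cast hn : (0:ℝ) < (n:ℝ))]
        have hsw : -(L * ((nk:ℝ) + (t:ℝ)*(d:ℝ) + 2)) = ((nk + t*d + 2 : ℕ):ℝ) * (-L) := by
          push_cast
          ring
        rw [hsw, Real.exp_nat_mul, hLn]
      have hterm2 : (Nat.choose n nk : ℝ) *
            ((Nat.choose (Nat.choose nk t) mk : ℝ) * (1 - L/B) ^ mk)
          ≤ ((n:ℝ) ^ nk * (n:ℝ) ^ (t*d)) * ((n:ℝ)⁻¹) ^ (nk + t*d + 2) := by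
        have hA : (Nat.choose n nk : ℝ) * (Nat.choose (Nat.choose nk t) mk : ℝ)
            ≤ (n:ℝ) ^ nk * (n:ℝ) ^ (t*d) := by exact_mod_cast hnat
        have hB2 : (1 - L/B) ^ mk ≤ ((n:ℝ)⁻¹) ^ (nk + t*d + 2) :=
          le_of_le_of_eq hpow1 hpow2
        calc (Nat.choose n nk : ℝ) *
              ((Nat.choose (Nat.choose nk t) mk : ℝ) * (1 - L/B) ^ mk)
            = ((Nat.choose n nk : ℝ) * (Nat.choose (Nat.choose nk t) mk : ℝ))
              * (1 - L/B) ^ mk := by ring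
          _ ≤ ((n:ℝ) ^ nk * (n:ℝ) ^ (t*d)) * ((n:ℝ)⁻¹) ^ (nk + t*d + 2) :=
              mul_le_mul hA hB2 (pow_nonneg hbase mk) (by positivity)
      have hnR : (2:ℝ) ≤ (n:ℝ) := by exact_mod_cast hn2
      have hn0 : (0:ℝ) < (n:ℝ) := by linarith
      have hfinal : ((n:ℝ) ^ nk * (n:ℝ) ^ (t*d)) * ((n:ℝ)⁻¹) ^ (nk + t*d + 2) ≤ 1/4 := by
        have heq : ((n:ℝ) ^ nk * (n:ℝ) ^ (t*d)) * ((n:ℝ)⁻¹) ^ (nk + t*d + 2)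
            = ((n:ℝ)^2)⁻¹ := by
          rw [inv_pow, ← pow_add, pow_add (n:ℝ) (nk + t*d) 2]
          field_simp
        rw [heq]
        have h4 : (4:ℝ) ≤ (n:ℝ)^2 := by nlinarith
        calc ((n:ℝ)^2)⁻¹ ≤ (4:ℝ)⁻¹ := by
              apply inv_anti₀ (by norm_num) h4
          _ = 1/4 := by norm_num
      exact hterm2.trans hfinal
  -- contradiction
  have hsplit : ∑ i ∈ Finset.univ.erase last, term i + term last = ∑ i : Fin k, term i :=
    Finset.sum_erase_add _ _ (Finset.mem_univ last)
  have hlt : (1:ℝ) < 1 := by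
    calc (1:ℝ) ≤ ∑ i : Fin k, term i := htotle
      _ = ∑ i ∈ Finset.univ.erase last, term i + term last := hsplit.symm
      _ < 1/4 + 1/4 := add_lt_add_of_lt_of_le (lt_of_le_of_lt hsmallsum hkey) hbig
      _ < 1 := by norm_num
  exact absurd hlt (lt_irrefl 1)
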